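/- (Ruskey–Williams) For every n ≥ 3, the canonical recycle sequence D_n is a Hamilton sequence for the restricted rotator graph RR_n({n−1,n}). -/

import Mathlib

open Equiv

/-- The prefix-rotation `σ_r = (1 2 ⋯ r)` of positions, 0-indexed as a
permutation of `Fin n` (it sends position `i` to `i+1` for `i < r-1`,
sends position `r-1` to `0`, and fixes all positions `≥ r`). -/
def sigmaRot (n r : ℕ) : Equiv.Perm (Fin n) :=
  if h : r - 1 < n then Fin.cycleRange ⟨r - 1, h⟩ else 1

/-- The permutation `σ_{r₁}σ_{r₂}⋯σ_{r_i}` (composed left-to-right) given by the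
first `i` entries of the sequence `S`. -/
def partialProd (n : ℕ) (S : List ℕ) (i : ℕ) : Equiv.Perm (Fin n) :=
  ((S.take i).map (sigmaRot n)).prod

/-- `S` is a Hamilton sequence for the restricted rotator graph `RR_n(R)`. -/
def IsHamiltonSeq (n : ℕ) (R : Set ℕ) (S : List ℕ) : Prop :=
  S.length = Nat.factorial n ∧
  (∀ r ∈ S, r ∈ R) ∧
  (∀ i < Nat.factorial n, ∀ j < Nat.factorial n,
      partialProd n S i = partialProd n S j → i = j) ∧
  partialProd n S S.length = 1

/-- The value (0-indexed symbol) at the last position of the string `a`;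
the one-line-notation symbol there is `lastVal a + 1`. -/
def lastVal {n : ℕ} (a : Equiv.Perm (Fin n)) : ℕ :=
  if h : 0 < n then ((a ⟨n - 1, Nat.sub_lt h Nat.one_pos⟩ : Fin n) : ℕ) else 0

/-- Arc relation of the restricted incomplete rotator graph `RIR_n(R,m)`:
both endpoints have last symbol `≤ m` and `b = a·σ_r` for some `r ∈ R`. -/
def RIRAdj (n m : ℕ) (R : Set ℕ) (a b : Equiv.Perm (Fin n)) : Prop :=
  lastVal a < m ∧ lastVal b < m ∧ ∃ r ∈ R, b = a * sigmaRot n r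

/-- `RIR_n(R,m)` is strongly connected. -/
def StronglyConnectedRIR (n m : ℕ) (R : Set ℕ) : Prop :=
  ∀ a b : Equiv.Perm (Fin n), lastVal a < m → lastVal b < m →
    Relation.ReflTransGen (RIRAdj n m R) a b

/-- The reuse operation: replace each entry `r` by `n,…,n,n+1-r` (`n-1` copies of `n`). -/
def reuseOp (n : ℕ) (S : List ℕ) : List ℕ :=
  (S.map (fun r => List.replicate (n - 1) n ++ [n + 1 - r])).flatten

/-- Corbett's reuse sequences: `C₁ = (1)` and `C_k = reuse_k(C_{k-1})`. -/
def corbettC : ℕ → List ℕ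
  | 0 => []
  | 1 => [1]
  | k + 2 => reuseOp (k + 2) (corbettC (k + 1))

/-- The recycle operation: replace each entry `r` by
`n, n, n-1, …, n-1, n, …, n` (`r-1` copies of `n-1`, then `n-r-1` copies of `n`). -/
def recycleOp (n : ℕ) (S : List ℕ) : List ℕ :=
  (S.map (fun r => n :: n :: (List.replicate (r - 1) (n - 1) ++ List.replicate (n - r - 1) n))).flatten

/-- The canonical recycle sequences: `D₁ = (1)` and `D_k = recycle_k(D_{k-1})`. -/
def recycleD : ℕ → List ℕ
  | 0 => []
  | 1 => [1]
  | k + 2 => recycleOp (k + 2) (recycleD (k + 1))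

/-- The rewind operation `rewind_m(S)` (with `S = T, n-1, n-1`):
`(T,n-1,n)`, then `m-2` copies of `(T,n)`, then `(T,n-1,n)`, then `m-2` copies of `n`. -/
def rewindOp (n m : ℕ) (S : List ℕ) : List ℕ :=
  (S.dropLast.dropLast ++ [n - 1, n])
    ++ (List.replicate (m - 2) (S.dropLast.dropLast ++ [n])).flatten
    ++ (S.dropLast.dropLast ++ [n - 1, n])
    ++ List.replicate (m - 2) n

/-- The canonical rewind sequences: `W₂ = (2,2)` and `W_k = rewind_k(W_{k-1})`. -/
def rewindW : ℕ → List ℕ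
  | 0 => []
  | 1 => []
  | 2 => [2, 2]
  | k + 3 => rewindOp (k + 3) (k + 3) (rewindW (k + 2))

/-- `S` is a Hamilton sequence for the restricted incomplete rotator graph `RIR_n(R,m)`,
starting from the string `n n-1 ⋯ 1` (which is `Fin.revPerm`). -/
def IsHamiltonSeqRIR (n m : ℕ) (R : Set ℕ) (S : List ℕ) : Prop :=
  S.length = m * Nat.factorial (n - 1) ∧
  (∀ r ∈ S, r ∈ R) ∧
  (∀ i < S.length, ∀ j < S.length,
      Fin.revPerm * partialProd n S i = Fin.revPerm * partialProd n S j → i = j) ∧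
  {b : Equiv.Perm (Fin n) | ∃ i < S.length, b = Fin.revPerm * partialProd n S i}
    = {b : Equiv.Perm (Fin n) | lastVal b < m} ∧
  Fin.revPerm * partialProd n S S.length = Fin.revPerm

/-- The cyclic shift `shift²` moving the first two entries to the end. -/
def shift2 (S : List ℕ) : List ℕ := S.drop 2 ++ S.take 2

namespace RW

def vA {N : ℕ} (p : Equiv.Perm (Fin N)) (v : ℕ) : ℕ :=
  if h : v < N then (p ⟨v, h⟩ : Fin N) else v

lemma vA_lt {N : ℕ} (p : Equiv.Perm (Fin N)) {v : ℕ} (h : v < N) : vA p v < N := by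
  simp only [vA, dif_pos h]; exact (p _).isLt

lemma vA_mul {N : ℕ} (f g : Equiv.Perm (Fin N)) (v : ℕ) :
    vA (f * g) v = vA f (vA g v) := by
  unfold vA
  by_cases h : v < N
  · rw [dif_pos h, dif_pos h, dif_pos ((g ⟨v, h⟩).isLt)]
    simp [Equiv.Perm.mul_apply]
  · rw [dif_neg h, dif_neg h, dif_neg h]

lemma vA_one {N : ℕ} (v : ℕ) : vA (1 : Equiv.Perm (Fin N)) v = v := by
  unfold vA; split <;> simp

lemma perm_ext {N : ℕ} {f g : Equiv.Perm (Fin N)} (h : ∀ v < N, vA f v = vA g v) : f = g := by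
  ext j
  have := h j.1 j.2
  simpa [vA, j.2] using this

lemma vA_inj {N : ℕ} {f g : Equiv.Perm (Fin N)} (h : f = g) (v : ℕ) : vA f v = vA g v := by
  rw [h]

lemma vA_sigmaRot {M r : ℕ} (h : r - 1 < M + 1) (v : ℕ) :
    vA (sigmaRot (M+1) r) v =
      if v < M + 1 then (if v < r - 1 then v + 1 else if v = r - 1 then 0 else v) else v := by
  unfold vA sigmaRot
  rw [dif_pos h]
  by_cases hv : v < M + 1
  · rw [dif_pos hv, if_pos hv]
    rcases lt_trichotomy v (r-1) with h1 | h1 | h1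
    · rw [if_pos h1, Fin.cycleRange_of_lt (by simpa [Fin.lt_def] using h1)]
      simp [Fin.val_add_one_of_lt (by simp [Fin.lt_def]; omega : (⟨v, hv⟩ : Fin (M+1)) < Fin.last M)]
    · rw [if_neg (by omega), if_pos h1]
      rw [show (⟨v, hv⟩ : Fin (M+1)) = ⟨r-1, h⟩ from by simp [h1]]
      simp [Fin.cycleRange_self]
    · rw [if_neg (by omega), if_neg (by omega), Fin.cycleRange_of_gt (by simpa [Fin.lt_def] using h1)]
  · rw [dif_neg hv, if_neg hv]

def iota {N : ℕ} (x : Equiv.Perm (Fin N)) : Equiv.Perm (Fin (N+1)) where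
  toFun j := if h : (j : ℕ) = 0 then ⟨0, by omega⟩ else
    ⟨(x ⟨(j : ℕ) - 1, by have := j.isLt; omega⟩ : Fin N) + 1, by
      have := (x ⟨(j : ℕ) - 1, by have := j.isLt; omega⟩).isLt; omega⟩
  invFun j := if h : (j : ℕ) = 0 then ⟨0, by omega⟩ else
    ⟨(x.symm ⟨(j : ℕ) - 1, by have := j.isLt; omega⟩ : Fin N) + 1, by
      have := (x.symm ⟨(j : ℕ) - 1, by have := j.isLt; omega⟩).isLt; omega⟩
  left_inv j := by
    dsimp only
    by_cases h : (j : ℕ) = 0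
    · rw [dif_pos h, dif_pos (by simp)]
      exact Fin.ext h.symm
    · rw [dif_neg h, dif_neg (by simp)]
      apply Fin.ext
      simp only [Nat.add_sub_cancel, Fin.eta, Equiv.symm_apply_apply]
      have := j.isLt; omega
  right_inv j := by
    dsimp only
    by_cases h : (j : ℕ) = 0
    · rw [dif_pos h, dif_pos (by simp)]
      exact Fin.ext h.symm
    · rw [dif_neg h, dif_neg (by simp)]
      apply Fin.ext
      simp only [Nat.add_sub_cancel, Fin.eta, Equiv.apply_symm_apply]
      have := j.isLt; omega

lemma vA_iota {N : ℕ} (x : Equiv.Perm (Fin N)) (v : ℕ) :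
    vA (iota x) v = if v < N + 1 then (if v = 0 then 0 else vA x (v - 1) + 1) else v := by
  unfold vA iota
  by_cases hv : v < N + 1
  · rw [dif_pos hv, if_pos hv]
    simp only [Equiv.coe_fn_mk]
    by_cases h0 : v = 0
    · simp [h0]
    · rw [dif_neg h0, if_neg h0, dif_pos (by omega : v - 1 < N)]
  · rw [dif_neg hv, if_neg hv]

lemma iota_one {N : ℕ} : iota (1 : Equiv.Perm (Fin N)) = 1 := by
  apply perm_ext; intro v hv
  simp only [vA_iota, vA_one]
  split_ifs <;> omega

lemma iota_mul {N : ℕ} (x y : Equiv.Perm (Fin N)) : iota (x * y) = iota x * iota y := by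
  apply perm_ext; intro v hv
  by_cases h0 : v = 0
  · subst h0
    have z : ∀ (K : ℕ) (w : Equiv.Perm (Fin K)), vA (iota w) 0 = 0 := by
      intro K w; rw [vA_iota]; simp
    rw [vA_mul, z, z, z]
  · have hb : vA y (v - 1) < N := vA_lt y (by omega)
    have e1 : vA (iota y) v = vA y (v - 1) + 1 := by
      rw [vA_iota, if_pos hv, if_neg h0]
    have e2 : vA (iota x) (vA y (v - 1) + 1) = vA x (vA y (v - 1)) + 1 := by
      rw [vA_iota, if_pos (by omega), if_neg (by omega), Nat.add_sub_cancel]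
    rw [vA_mul, e1, e2, vA_iota, if_pos hv, if_neg h0, vA_mul]

lemma iota_inj {N : ℕ} {x y : Equiv.Perm (Fin N)} (h : iota x = iota y) : x = y := by
  apply perm_ext; intro u hu
  have h2 := vA_inj h (u + 1)
  rw [vA_iota, vA_iota, if_pos (show u + 1 < N + 1 by omega),
    if_pos (show u + 1 < N + 1 by omega), if_neg (show ¬u + 1 = 0 by omega),
    if_neg (show ¬u + 1 = 0 by omega), Nat.add_sub_cancel] at h2
  omega

section Main

variable (M : ℕ)

def tau : Equiv.Perm (Fin (M+3)) := sigmaRot (M+3) (M+3)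
def rho : Equiv.Perm (Fin (M+3)) := sigmaRot (M+3) (M+2)

lemma vA_tau (v : ℕ) :
    vA (tau M) v = if v < M + 3 then (if v + 1 < M + 3 then v + 1 else 0) else v := by
  have e : tau M = sigmaRot (M+2+1) (M+3) := rfl
  rw [e, vA_sigmaRot (by omega)]
  split_ifs <;> omega

lemma vA_rho (v : ℕ) :
    vA (rho M) v = if v < M + 3 then (if v < M + 1 then v + 1 else if v = M + 1 then 0 else v) else v := by
  have e : rho M = sigmaRot (M+2+1) (M+2) := rfl
  rw [e, vA_sigmaRot (by omega)]
  split_ifs <;> omega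

lemma vA_sig (c : ℕ) (hc : c ≤ M + 2) (v : ℕ) :
    vA (sigmaRot (M+2) c) v =
      if v < M + 2 then (if v < c - 1 then v + 1 else if v = c - 1 then 0 else v) else v := by
  have e : sigmaRot (M+2) c = sigmaRot (M+1+1) c := rfl
  rw [e, vA_sigmaRot (by omega)]

lemma vA_tau_pow (k : ℕ) (hk : k ≤ M + 3) (v : ℕ) :
    vA ((tau M)^k) v = if v < M + 3 then (if v + k < M + 3 then v + k else v + k - (M+3)) else v := by
  induction k generalizing v with
  | zero => simp only [pow_zero, vA_one]; split_ifs <;> omega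
  | succ k ih =>
    rw [pow_succ, vA_mul, vA_tau, ih (by omega)]
    split_ifs <;> omega

lemma tau_pow_card : (tau M)^(M+3) = 1 := by
  apply perm_ext; intro v hv
  rw [vA_tau_pow M (M+3) le_rfl, vA_one]
  split_ifs <;> omega

lemma sig_zero : sigmaRot (M+2) 0 = 1 := by
  apply perm_ext; intro v hv
  rw [vA_sig M 0 (by omega), vA_one]
  split_ifs <;> omega

lemma sig_one : sigmaRot (M+2) 1 = 1 := by
  apply perm_ext; intro v hv
  rw [vA_sig M 1 (by omega), vA_one]
  split_ifs <;> omega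

lemma key (c : ℕ) (h1 : 1 ≤ c) (h2 : c ≤ M + 1) :
    iota (sigmaRot (M+2) c) * (tau M)^(c+1) * rho M
      = iota (sigmaRot (M+2) (c+1)) * (tau M)^(c+2) := by
  apply perm_ext; intro v hv
  simp only [vA_mul]
  have h0 : vA (rho M) v < M+3 := vA_lt _ hv
  have hA : (v < M+1 ∧ vA (rho M) v = v+1) ∨ (v = M+1 ∧ vA (rho M) v = 0)
      ∨ (v > M+1 ∧ vA (rho M) v = v) := by
    rw [vA_rho]; split_ifs <;> omega
  have hBlt : vA ((tau M)^(c+1)) (vA (rho M) v) < M+3 := vA_lt _ h0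
  have hB : (vA (rho M) v + (c+1) < M+3 ∧
        vA ((tau M)^(c+1)) (vA (rho M) v) = vA (rho M) v + (c+1)) ∨
      (vA (rho M) v + (c+1) ≥ M+3 ∧
        vA ((tau M)^(c+1)) (vA (rho M) v) = vA (rho M) v + (c+1) - (M+3)) := by
    rw [vA_tau_pow M (c+1) (by omega)]; split_ifs <;> omega
  have hB'lt : vA ((tau M)^(c+2)) v < M+3 := vA_lt _ hv
  have hB' : (v + (c+2) < M+3 ∧ vA ((tau M)^(c+2)) v = v + (c+2)) ∨
      (v + (c+2) ≥ M+3 ∧ vA ((tau M)^(c+2)) v = v + (c+2) - (M+3)) := by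
    rw [vA_tau_pow M (c+2) (by omega)]; split_ifs <;> omega
  have hU : ∀ w : ℕ, (w < M+2 ∧ ((w < c-1 ∧ vA (sigmaRot (M+2) c) w = w+1) ∨
        (w = c-1 ∧ vA (sigmaRot (M+2) c) w = 0) ∨
        (w > c-1 ∧ vA (sigmaRot (M+2) c) w = w))) ∨
      (w ≥ M+2 ∧ vA (sigmaRot (M+2) c) w = w) := by
    intro w; rw [vA_sig M c (by omega)]; split_ifs <;> omega
  have hU' : ∀ w : ℕ, (w < M+2 ∧ ((w < (c+1)-1 ∧ vA (sigmaRot (M+2) (c+1)) w = w+1) ∨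
        (w = (c+1)-1 ∧ vA (sigmaRot (M+2) (c+1)) w = 0) ∨
        (w > (c+1)-1 ∧ vA (sigmaRot (M+2) (c+1)) w = w))) ∨
      (w ≥ M+2 ∧ vA (sigmaRot (M+2) (c+1)) w = w) := by
    intro w; rw [vA_sig M (c+1) (by omega)]; split_ifs <;> omega
  have hX : (vA ((tau M)^(c+1)) (vA (rho M) v) = 0 ∧
        vA (iota (sigmaRot (M+2) c)) (vA ((tau M)^(c+1)) (vA (rho M) v)) = 0) ∨
      (¬ vA ((tau M)^(c+1)) (vA (rho M) v) = 0 ∧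
        vA (iota (sigmaRot (M+2) c)) (vA ((tau M)^(c+1)) (vA (rho M) v)) =
          vA (sigmaRot (M+2) c) (vA ((tau M)^(c+1)) (vA (rho M) v) - 1) + 1) := by
    rw [vA_iota]; split_ifs <;> omega
  have hX' : (vA ((tau M)^(c+2)) v = 0 ∧
        vA (iota (sigmaRot (M+2) (c+1))) (vA ((tau M)^(c+2)) v) = 0) ∨
      (¬ vA ((tau M)^(c+2)) v = 0 ∧
        vA (iota (sigmaRot (M+2) (c+1))) (vA ((tau M)^(c+2)) v) =
          vA (sigmaRot (M+2) (c+1)) (vA ((tau M)^(c+2)) v - 1) + 1) := by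
    rw [vA_iota]; split_ifs <;> omega
  have hu1 := hU (vA ((tau M)^(c+1)) (vA (rho M) v) - 1)
  have hu2 := hU' (vA ((tau M)^(c+2)) v - 1)
  omega

def V (k : ℕ) : Equiv.Perm (Fin (M+3)) := iota (sigmaRot (M+2) (k-1)) * (tau M)^k

lemma V_zero : V M 0 = 1 := by
  unfold V
  rw [show (0:ℕ) - 1 = 0 from rfl, sig_zero, iota_one, pow_zero, one_mul]

lemma partialProd_zero (n : ℕ) (S : List ℕ) : partialProd n S 0 = 1 := rfl

lemma partialProd_cons (n a : ℕ) (S : List ℕ) (i : ℕ) :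
    partialProd n (a :: S) (i+1) = sigmaRot n a * partialProd n S i := by
  unfold partialProd
  rw [List.take_succ_cons, List.map_cons, List.prod_cons]

lemma partialProd_append_left (n : ℕ) {S : List ℕ} (T : List ℕ) {i : ℕ} (h : i ≤ S.length) :
    partialProd n (S ++ T) i = partialProd n S i := by
  unfold partialProd
  rw [List.take_append_of_le_length h]

lemma partialProd_append_add (n : ℕ) (S T : List ℕ) (i : ℕ) :
    partialProd n (S ++ T) (S.length + i) = partialProd n S S.length * partialProd n T i := by
  unfold partialProd
  rw [List.take_append, List.map_append, List.prod_append,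
    List.take_of_length_le (Nat.le_add_right _ _), Nat.add_sub_cancel_left, List.take_length]

lemma partialProd_succ (n : ℕ) (S : List ℕ) (i : ℕ) (h : i < S.length) :
    partialProd n S (i+1) = partialProd n S i * sigmaRot n S[i] := by
  unfold partialProd
  simp only [List.map_take]
  rw [List.prod_take_succ _ _ (by simpa using h)]
  simp

def blockL (n r : ℕ) : List ℕ :=
  n :: n :: (List.replicate (r - 1) (n - 1) ++ List.replicate (n - r - 1) n)

lemma recycleOp_cons (n r : ℕ) (S : List ℕ) :
    recycleOp n (r :: S) = blockL n r ++ recycleOp n S := by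
  unfold recycleOp blockL
  rw [List.map_cons, List.flatten_cons]

lemma recycleOp_nil (n : ℕ) : recycleOp n [] = [] := rfl

lemma blockL_length {r : ℕ} (hr1 : M+1 ≤ r) (hr2 : r ≤ M+2) :
    (blockL (M+3) r).length = M+3 := by
  simp [blockL]
  omega

lemma blockL_get {r : ℕ} (hr1 : M+1 ≤ r) (hr2 : r ≤ M+2) (k : ℕ)
    (h' : k < (blockL (M+3) r).length) :
    (blockL (M+3) r)[k] = if k < 2 then M+3 else if k < r+1 then M+2 else M+3 := by
  have hlen : (blockL (M+3) r).length = M+3 := blockL_length M hr1 hr2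
  match k with
  | 0 => simp [blockL]
  | 1 => simp [blockL]
  | (j+2) =>
    have hj : j < M+1 := by omega
    have e : (blockL (M+3) r)[j+2] =
        (List.replicate (r-1) (M+3-1) ++ List.replicate (M+3-r-1) (M+3))[j]'(by
          simp [blockL] at h' ⊢; omega) := by
      simp [blockL]
    rw [e]
    by_cases hc : j < r - 1
    · rw [List.getElem_append_left (by simpa using hc), List.getElem_replicate,
        if_neg (by omega : ¬ (j+2 < 2)), if_pos (by omega : j+2 < r+1)]
      omega
    · rw [List.getElem_append_right (by simpa using hc), List.getElem_replicate,
        if_neg (by omega : ¬ (j+2 < 2)), if_neg (by omega : ¬ (j+2 < r+1))]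

lemma block_prefix {r : ℕ} (hr1 : M+1 ≤ r) (hr2 : r ≤ M+2) :
    ∀ k ≤ M+3, partialProd (M+3) (blockL (M+3) r) k =
      if k ≤ M+2 then V M k else iota (sigmaRot (M+2) r) := by
  intro k
  induction k with
  | zero =>
    intro _
    rw [partialProd_zero, if_pos (by omega), V_zero]
  | succ k ih =>
    intro hk1
    have hk : k ≤ M+2 := by omega
    have hlen : (blockL (M+3) r).length = M+3 := blockL_length M hr1 hr2
    rw [partialProd_succ _ _ _ (by omega), ih (by omega), if_pos hk,
      blockL_get M hr1 hr2 k (by omega)]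
    by_cases hk2 : k < 2
    · rw [if_pos hk2]
      have htau : sigmaRot (M+3) (M+3) = tau M := rfl
      rw [htau]
      interval_cases k
      · rw [if_pos (by omega), V_zero, one_mul]
        unfold V
        rw [show (1:ℕ) - 1 = 0 from rfl, sig_zero, iota_one, one_mul, pow_one]
      · rw [if_pos (by omega)]
        unfold V
        rw [show (1:ℕ) - 1 = 0 from rfl, show (2:ℕ) - 1 = 1 from rfl, sig_zero, sig_one,
          iota_one, one_mul, one_mul]
        rw [pow_succ, pow_zero, one_mul, pow_succ, pow_one]
    · rw [if_neg hk2]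
      by_cases hk3 : k < r + 1
      · -- generator is rho
        rw [if_pos hk3]
        have hrho : sigmaRot (M+3) (M+2) = rho M := rfl
        rw [hrho]
        have hc1 : 1 ≤ k - 1 := by omega
        have e1 : k - 1 + 1 = k := by omega
        have e2 : k - 1 + 2 = k + 1 := by omega
        by_cases hk4 : k+1 ≤ M+2
        · rw [if_pos hk4]
          have hkey := key M (k-1) hc1 (by omega)
          rw [e1, e2] at hkey
          unfold V
          rw [Nat.add_sub_cancel]
          exact hkey
        · -- k = M+2, boundary with rho: r = M+2
          have hk5 : k = M+2 := by omega
          have hr : r = M+2 := by omega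
          subst hk5; subst hr
          rw [if_neg hk4]
          have hkey := key M (M+1) (by omega) (by omega)
          have h1 : (tau M)^(M+1+2) = 1 := tau_pow_card M
          rw [h1, mul_one] at hkey
          exact hkey
      · -- generator is tau, k = M+2, r = M+1
        rw [if_neg hk3]
        have hk5 : k = M+2 := by omega
        have hr : r = M+1 := by omega
        subst hk5; subst hr
        rw [if_neg (by omega)]
        have htau : sigmaRot (M+3) (M+3) = tau M := rfl
        rw [htau]
        show iota (sigmaRot (M+2) (M+1)) * (tau M)^(M+2) * tau M = iota (sigmaRot (M+2) (M+1))
        rw [mul_assoc, ← pow_succ, show (tau M)^(M+2+1) = 1 from tau_pow_card M, mul_one]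


lemma partialProd_nil (n i : ℕ) : partialProd n [] i = 1 := by
  unfold partialProd; simp

lemma main (S : List ℕ) (hS : ∀ r ∈ S, M+1 ≤ r ∧ r ≤ M+2) :
    ∀ i k, ((i < S.length ∧ k ≤ M+2) ∨ (i = S.length ∧ k = 0)) →
    partialProd (M+3) (recycleOp (M+3) S) ((M+3)*i + k) =
      iota (partialProd (M+2) S i) * V M k := by
  induction S with
  | nil =>
    intro i k h
    have hi : i = 0 ∧ k = 0 := by
      rcases h with ⟨h1, _⟩ | ⟨h1, h2⟩
      · simp at h1
      · simp at h1; exact ⟨h1, h2⟩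
    obtain ⟨rfl, rfl⟩ := hi
    rw [recycleOp_nil, partialProd_nil, partialProd_nil, iota_one, V_zero, one_mul]
  | cons r S ih =>
    intro i k h
    have hr := hS r (List.mem_cons_self)
    have hS' : ∀ x ∈ S, M+1 ≤ x ∧ x ≤ M+2 := fun x hx => hS x (List.mem_cons_of_mem _ hx)
    rw [recycleOp_cons]
    match i with
    | 0 =>
      have hk : k ≤ M+2 := by
        rcases h with ⟨_, hk⟩ | ⟨he, hk⟩
        · exact hk
        · omega
      rw [show (M+3)*0 + k = k by simp]
      rw [partialProd_append_left _ _ (by rw [blockL_length M hr.1 hr.2]; omega),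
        block_prefix M hr.1 hr.2 k (by omega), if_pos hk, partialProd_zero, iota_one, one_mul]
    | (i'+1) =>
      have hcond : (i' < S.length ∧ k ≤ M+2) ∨ (i' = S.length ∧ k = 0) := by
        rcases h with ⟨h1, h2⟩ | ⟨h1, h2⟩
        · left; simp at h1; exact ⟨by omega, h2⟩
        · right; simp at h1; exact ⟨h1, h2⟩
      have e : (M+3)*(i'+1) + k = (blockL (M+3) r).length + ((M+3)*i' + k) := by
        rw [blockL_length M hr.1 hr.2]; ring
      rw [e, partialProd_append_add, blockL_length M hr.1 hr.2,
        block_prefix M hr.1 hr.2 (M+3) le_rfl, if_neg (by omega), ih hS' i' k hcond,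
        partialProd_cons, iota_mul, mul_assoc]

lemma recycleOp_length (S : List ℕ) (hS : ∀ r ∈ S, M+1 ≤ r ∧ r ≤ M+2) :
    (recycleOp (M+3) S).length = (M+3) * S.length := by
  induction S with
  | nil => simp [recycleOp_nil]
  | cons r S ih =>
    have hr := hS r (List.mem_cons_self)
    rw [recycleOp_cons, List.length_append, blockL_length M hr.1 hr.2,
      ih (fun x hx => hS x (List.mem_cons_of_mem _ hx)), List.length_cons]
    ring

lemma mem_recycleOp {a : ℕ} (S : List ℕ) (hS : ∀ r ∈ S, M+1 ≤ r ∧ r ≤ M+2)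
    (ha : a ∈ recycleOp (M+3) S) : a = M+2 ∨ a = M+3 := by
  induction S with
  | nil => rw [recycleOp_nil] at ha; simp at ha
  | cons r S ih =>
    rw [recycleOp_cons, List.mem_append] at ha
    rcases ha with h | h
    · have hr := hS r (List.mem_cons_self)
      simp [blockL, List.mem_replicate, List.mem_append, List.mem_cons] at h
      omega
    · exact ih (fun x hx => hS x (List.mem_cons_of_mem _ hx)) h

lemma vA_iota_zero' : ∀ (w : Equiv.Perm (Fin (M+2))), vA (iota w) 0 = 0 := by
  intro w; rw [vA_iota]; simp

lemma iota_eq_zero {w : Equiv.Perm (Fin (M+2))} {t : ℕ} (h : vA (iota w) t = 0) : t = 0 := by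
  rw [vA_iota] at h
  split_ifs at h <;> omega

lemma V_detect (k k' : ℕ) (hk : k ≤ M+2) (hk' : k' ≤ M+2) (z z' : Equiv.Perm (Fin (M+2)))
    (h : iota z * V M k = iota z' * V M k') : k = k' := by
  set v0 := if k = 0 then 0 else (M+3) - k with hv0
  have hv0lt : v0 < M+3 := by rw [hv0]; split_ifs <;> omega
  have h1 := vA_inj h v0
  unfold V at h1
  simp only [vA_mul] at h1
  have ht : vA ((tau M)^k) v0 = 0 := by
    rw [vA_tau_pow M k (by omega), if_pos hv0lt, hv0]
    split_ifs <;> omega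
  rw [ht, vA_iota_zero', vA_iota_zero'] at h1
  have e1 := iota_eq_zero M h1.symm
  have e2 := iota_eq_zero M e1
  rw [vA_tau_pow M k' (by omega), if_pos hv0lt] at e2
  rw [hv0] at e2
  split_ifs at e2 <;> omega

theorem stepLemma (S : List ℕ) (hlen : S.length = Nat.factorial (M+2))
    (hS : ∀ r ∈ S, M+1 ≤ r ∧ r ≤ M+2)
    (hinj : ∀ i < Nat.factorial (M+2), ∀ j < Nat.factorial (M+2),
      partialProd (M+2) S i = partialProd (M+2) S j → i = j)
    (htot : partialProd (M+2) S S.length = 1) :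
    IsHamiltonSeq (M+3) {M+2, M+3} (recycleOp (M+3) S) := by
  have hfac : Nat.factorial (M+3) = (M+3) * Nat.factorial (M+2) := Nat.factorial_succ (M+2)
  have hlen2 : (recycleOp (M+3) S).length = (M+3) * S.length := recycleOp_length M S hS
  refine ⟨?_, ?_, ?_, ?_⟩
  · rw [hlen2, hlen, hfac]
  · intro r hrm
    rcases mem_recycleOp M S hS hrm with h | h <;> simp [h]
  · intro i hi j hj hequ
    have hmod1 : i % (M+3) < M+3 := Nat.mod_lt i (by omega)
    have hmod2 : j % (M+3) < M+3 := Nat.mod_lt j (by omega)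
    have hq1 : i / (M+3) < Nat.factorial (M+2) := by
      apply (Nat.div_lt_iff_lt_mul (by omega : 0 < M+3)).2
      rw [mul_comm, ← hfac]; exact hi
    have hq2 : j / (M+3) < Nat.factorial (M+2) := by
      apply (Nat.div_lt_iff_lt_mul (by omega : 0 < M+3)).2
      rw [mul_comm, ← hfac]; exact hj
    have hi' : i = (M+3) * (i/(M+3)) + i % (M+3) := (Nat.div_add_mod i (M+3)).symm
    have hj' : j = (M+3) * (j/(M+3)) + j % (M+3) := (Nat.div_add_mod j (M+3)).symm
    have e1 := main M S hS (i/(M+3)) (i%(M+3))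
      (Or.inl ⟨by rw [hlen]; exact hq1, by omega⟩)
    have e2 := main M S hS (j/(M+3)) (j%(M+3))
      (Or.inl ⟨by rw [hlen]; exact hq2, by omega⟩)
    rw [hi', hj', e1, e2] at hequ
    have hkk := V_detect M _ _ (by omega) (by omega) _ _ hequ
    rw [hkk] at hequ
    have hz := iota_inj (mul_right_cancel hequ)
    have hqq := hinj _ hq1 _ hq2 hz
    rw [hqq, hkk] at hi'
    omega
  · rw [hlen2]
    have hmm := main M S hS S.length 0 (Or.inr ⟨rfl, rfl⟩)
    rw [htot, iota_one, V_zero, one_mul] at hmm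
    simpa using hmm


end Main

end RW

theorem Dgood : ∀ K : ℕ, IsHamiltonSeq (K+3) {K+2, K+3} (recycleD (K+3)) := by
  intro K
  induction K with
  | zero =>
    have h := RW.stepLemma 0 [2,2] (by decide) (by decide)
      (by decide) (by decide)
    have e : recycleD 3 = recycleOp (0+3) [2,2] := rfl
    rw [e]
    exact h
  | succ K ihK =>
    obtain ⟨hlen, hmem, hinj, htot⟩ := ihK
    have hS : ∀ r ∈ recycleD (K+3), (K+1)+1 ≤ r ∧ r ≤ (K+1)+2 := by
      intro r hr
      have := hmem r hr
      rcases this with h | h <;> simp_all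
    have h := RW.stepLemma (K+1) (recycleD (K+3)) hlen hS hinj htot
    have e : recycleD (K+1+3) = recycleOp ((K+1)+3) (recycleD (K+3)) := rfl
    rw [e]
    exact h


/-- Ruskey–Williams. For every `n ≥ 3`, the canonical recycle sequence
`D_n` is a Hamilton sequence for the restricted rotator graph `RR_n({n-1,n})`. -/
theorem stmt9 (n : ℕ) (hn : 3 ≤ n) :
    IsHamiltonSeq n {n - 1, n} (recycleD n) := by
  obtain ⟨K, rfl⟩ : ∃ K, n = K + 3 := ⟨n - 3, by omega⟩
  exact Dgood K
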